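/- arXiv:2206.07540 — 3 statements merged into one kernel-verified Lean document; each statement's English description precedes it below -/
import Mathlib

section
/- Let ψ : G → G be a commutator-central endomorphism of a group G and let α ∈ 𝓔. Then for all g, h ∈ G, the element ψ_α(g·h) · ψ_α(g)⁻¹ · ψ_α(h)⁻¹ lies in the center Z(G); that is, ψ_α(g·h) · ψ_α(g)⁻¹ ≡ ψ_α(h) modulo Z(G). -/
/-- Evaluation of an element of the free group `𝓔 = FreeGroup (Monoid.End G)`
at an element `g : G`: the image of `α` under the homomorphism `𝓔 → G`
given by `FreeGroup.lift (fun φ => φ g)`. -/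
def evalE {G : Type*} [Group G] (α : FreeGroup (Monoid.End G)) (g : G) : G :=
  FreeGroup.lift (fun φ : Monoid.End G => φ g) α

open scoped commutatorElement

lemma evalE_mul {G : Type*} [Group G] (α β : FreeGroup (Monoid.End G)) (g : G) :
    evalE (α * β) g = evalE α g * evalE β g := map_mul _ _ _

lemma evalE_of {G : Type*} [Group G] (φ : Monoid.End G) (g : G) :
    evalE (FreeGroup.of φ) g = φ g := FreeGroup.lift_apply_of

lemma evalE_inv {G : Type*} [Group G] (α : FreeGroup (Monoid.End G)) (g : G) :
    evalE α⁻¹ g = (evalE α g)⁻¹ := map_inv _ _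

lemma psi_commutator_mem {G : Type*} [Group G]
    (ψ : Monoid.End G) (hψ : ∀ g h : G, ψ ⁅g, h⁆ ∈ Subgroup.center G)
    {x : G} (hx : x ∈ commutator G) : ψ x ∈ Subgroup.center G := by
  rw [commutator_eq_closure] at hx
  induction hx using Subgroup.closure_induction with
  | mem x hx => obtain ⟨g, h, rfl⟩ := hx; exact hψ g h
  | one => simp [map_one]
  | mul x y _ _ hx hy => rw [map_mul]; exact Subgroup.mul_mem _ hx hy
  | inv x _ hx => rw [map_inv]; exact Subgroup.inv_mem _ hx

lemma evalE_mul_mem {G : Type*} [Group G] (α : FreeGroup (Monoid.End G)) (g h : G) :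
    evalE α (g * h) * (evalE α h)⁻¹ * (evalE α g)⁻¹ ∈ commutator G := by
  have key : Abelianization.of (evalE α (g * h)) =
      Abelianization.of (evalE α g) * Abelianization.of (evalE α h) := by
    induction α using FreeGroup.induction_on with
    | C1 => simp [evalE, map_one]
    | of φ =>
        rw [evalE_of, evalE_of, evalE_of, map_mul φ, map_mul]
    | inv_of φ ih =>
        rw [evalE_inv, evalE_inv, evalE_inv, map_inv, map_inv, map_inv, ih, mul_inv,
          mul_comm]
    | mul α β ihα ihβ =>
        rw [evalE_mul, evalE_mul, evalE_mul, map_mul, map_mul, map_mul, ihα, ihβ,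
          mul_mul_mul_comm]
  have : Abelianization.of (evalE α (g * h) * (evalE α h)⁻¹ * (evalE α g)⁻¹) = 1 := by
    simp [map_mul, map_inv, key]
  exact (QuotientGroup.eq_one_iff _).mp this

/-- `ψ_α(g·h) · ψ_α(g)⁻¹ ≡ ψ_α(h)` modulo the center. -/
theorem psiAlpha_cancel_mod_center {G : Type*} [Group G]
    (ψ : Monoid.End G) (hψ : ∀ g h : G, ψ ⁅g, h⁆ ∈ Subgroup.center G)
    (α : FreeGroup (Monoid.End G)) (g h : G) :
    ψ (evalE α (g * h)) * (ψ (evalE α g))⁻¹ * (ψ (evalE α h))⁻¹ ∈ Subgroup.center G := by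
  have h1 : ψ (evalE α (g * h) * (evalE α h)⁻¹ * (evalE α g)⁻¹) ∈ Subgroup.center G :=
    psi_commutator_mem ψ hψ (evalE_mul_mem α g h)
  have h2 : ψ ⁅evalE α g, evalE α h⁆ ∈ Subgroup.center G := hψ _ _
  have key : ψ (evalE α (g * h)) * (ψ (evalE α g))⁻¹ * (ψ (evalE α h))⁻¹ =
      ψ (evalE α (g * h) * (evalE α h)⁻¹ * (evalE α g)⁻¹) * ψ ⁅evalE α g, evalE α h⁆ := by
    simp only [map_mul, map_inv, commutatorElement_def]
    group
  rw [key]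
  exact Subgroup.mul_mem _ h1 h2
end

section
/- Let ψ, ψ' : G → G be commutator-central endomorphisms of a group G such that ⁅ψ(g), ψ'(h)⁆ ∈ Z(G) for all g, h ∈ G. Let α, β ∈ 𝓔, write g ∘ h := g ∘_{ψ,α} h and g ⋆ h := g ∘_{ψ',β} h, and for g ∈ G write g̃ := ψ_α(g)⁻¹ · g⁻¹ · ψ_α(g) (the inverse of g in the group (G, ∘)). Then the brace relation g ⋆ (h ∘ k) = ((g ⋆ h) ∘ g̃) ∘ (g ⋆ k) holds for all g, h, k ∈ G; consequently (G, ∘, ⋆) is a skew left brace. -/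
/-- The binary operation `g ∘_{ψ,α} h = g · ψ_α(g) · h · ψ_α(g)⁻¹`, where
`ψ_α(g) = ψ (α(g))`. -/
def op {G : Type*} [Group G] (ψ : Monoid.End G) (α : FreeGroup (Monoid.End G)) (g h : G) : G :=
  g * ψ (evalE α g) * h * (ψ (evalE α g))⁻¹

open scoped commutatorElement

private lemma evalE_one' {G : Type*} [Group G] (α : FreeGroup (Monoid.End G)) :
    evalE α (1 : G) = 1 := by
  induction α using FreeGroup.induction_on with
  | C1 => simp [evalE]
  | of φ =>
      show FreeGroup.lift _ (FreeGroup.of φ) = 1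
      rw [FreeGroup.lift_apply_of, map_one]
  | inv_of φ ih => simpa [evalE, map_inv] using ih
  | mul x y ihx ihy =>
      simp only [evalE, map_mul] at *
      rw [ihx, ihy, mul_one]

private lemma conj_eq_of_center {G : Type*} [Group G] {x y : G}
    (h : x⁻¹ * y ∈ Subgroup.center G) (w : G) :
    x * w * x⁻¹ = y * w * y⁻¹ := by
  have hz := Subgroup.mem_center_iff.mp h
  have hy : y = x * (x⁻¹ * y) := by group
  rw [hy]
  calc x * w * x⁻¹ = x * ((x⁻¹*y) * w * (x⁻¹*y)⁻¹) * x⁻¹ := by rw [← hz w]; group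
    _ = (x * (x⁻¹*y)) * w * (x * (x⁻¹*y))⁻¹ := by group

private lemma mk_comm {G : Type*} [Group G] {x y : G}
    (h : ⁅x, y⁆ ∈ Subgroup.center G) :
    Commute (QuotientGroup.mk x : G ⧸ Subgroup.center G) (QuotientGroup.mk y) := by
  rw [← commutatorElement_eq_one_iff_commute]
  show (QuotientGroup.mk ⁅x, y⁆ : G ⧸ Subgroup.center G) = 1
  rwa [QuotientGroup.eq_one_iff]

private lemma mul_mul_mul_comm'' {M : Type*} [Group M] {a b c d : M} (h : b * c = c * b) :
    a * b * (c * d) = a * c * (b * d) := by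
  rw [mul_assoc a b, ← mul_assoc b c d, h, mul_assoc c b d, ← mul_assoc a c]

private lemma conj_cancel {M : Type*} [Group M] {p q r : M} (h : Commute q r) :
    p * q * r * q⁻¹ = p * r := by
  rw [mul_assoc p q r, h.eq, ← mul_assoc p r q, mul_assoc _ q q⁻¹, mul_inv_cancel, mul_one]

private lemma conj_comm_cancel {M : Type*} [Group M] {q r : M} (h : Commute q r) :
    q * r * q⁻¹ = r := by
  rw [h.eq]; group

private lemma mk_eval_mul {G : Type*} [Group G] (ψ : Monoid.End G)
    (hψ : ∀ u v : G, ψ ⁅u, v⁆ ∈ Subgroup.center G)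
    (α : FreeGroup (Monoid.End G)) (x y : G) :
    (QuotientGroup.mk (ψ (evalE α (x * y))) : G ⧸ Subgroup.center G)
      = QuotientGroup.mk (ψ (evalE α x)) * QuotientGroup.mk (ψ (evalE α y)) := by
  have Hc : ∀ u v : G,
      Commute (QuotientGroup.mk (ψ u) : G ⧸ Subgroup.center G) (QuotientGroup.mk (ψ v)) := by
    intro u v
    apply mk_comm
    rw [← map_commutatorElement]
    exact hψ u v
  induction α using FreeGroup.induction_on with
  | C1 => simp [evalE]
  | of φ =>
      have hp : (pure φ : FreeGroup (Monoid.End G)) = FreeGroup.of φ := rfl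
      simp only [evalE, hp, FreeGroup.lift_apply_of, map_mul, QuotientGroup.mk_mul]
  | inv_of φ ih =>
      simp only [evalE, map_inv, QuotientGroup.mk_inv] at *
      rw [ih, mul_inv_rev]
      exact ((Hc _ _).inv_left.inv_right).eq
  | mul a b iha ihb =>
      simp only [evalE, map_mul, QuotientGroup.mk_mul] at *
      rw [iha, ihb, mul_mul_mul_comm'' (Hc _ _).eq]

/-- for commutator-central `ψ, ψ'` whose images commute modulo the
center, the brace relation `g ⋆ (h ∘ k) = ((g ⋆ h) ∘ g̃) ∘ (g ⋆ k)` holds, where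
`∘ = ∘_{ψ,α}`, `⋆ = ∘_{ψ',β}` and `g̃` is the `∘`-inverse of `g`;
consequently `(G, ∘, ⋆)` is a skew left brace. -/
theorem brace_relation_two_maps {G : Type*} [Group G]
    (ψ ψ' : Monoid.End G)
    (hψ : ∀ g h : G, ψ ⁅g, h⁆ ∈ Subgroup.center G)
    (hψ' : ∀ g h : G, ψ' ⁅g, h⁆ ∈ Subgroup.center G)
    (hcomm : ∀ g h : G, ⁅ψ g, ψ' h⁆ ∈ Subgroup.center G)
    (α β : FreeGroup (Monoid.End G)) (g h k : G) :
    op ψ' β g (op ψ α h k) =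
      op ψ α (op ψ α (op ψ' β g h) ((ψ (evalE α g))⁻¹ * g⁻¹ * ψ (evalE α g)))
        (op ψ' β g k) := by
  have Hc : ∀ u v : G,
      Commute (QuotientGroup.mk (ψ u) : G ⧸ Subgroup.center G) (QuotientGroup.mk (ψ v)) := by
    intro u v
    apply mk_comm
    rw [← map_commutatorElement]
    exact hψ u v
  have am := mk_eval_mul ψ hψ α
  have a1 : (QuotientGroup.mk (ψ (evalE α (1 : G))) : G ⧸ Subgroup.center G) = 1 := by
    rw [evalE_one', map_one]
    rfl
  have ainv : ∀ x : G,
      (QuotientGroup.mk (ψ (evalE α x⁻¹)) : G ⧸ Subgroup.center G)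
        = (QuotientGroup.mk (ψ (evalE α x)))⁻¹ := by
    intro x
    have h0 := am x⁻¹ x
    rw [inv_mul_cancel, a1] at h0
    exact eq_inv_of_mul_eq_one_left h0.symm
  -- names
  set P := ψ (evalE α g) with hP
  set Q := ψ (evalE α h) with hQ
  set R := ψ' (evalE β g) with hR
  -- a(u) = a(g) a(h) for u = g*R*h*R⁻¹
  have hu_mk : (QuotientGroup.mk (ψ (evalE α (g * R * h * R⁻¹))) : G ⧸ Subgroup.center G)
      = QuotientGroup.mk (ψ (evalE α g)) * QuotientGroup.mk (ψ (evalE α h)) := by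
    rw [am, am, am, ainv]
    exact conj_cancel (Hc _ _)
  -- conjugation by A(u) equals conjugation by Q*P
  have h1 : ∀ w : G, ψ (evalE α (g * R * h * R⁻¹)) * w * (ψ (evalE α (g * R * h * R⁻¹)))⁻¹
      = (Q * P) * w * (Q * P)⁻¹ := by
    intro w
    apply conj_eq_of_center
    apply (QuotientGroup.eq (s := Subgroup.center G)).mp
    rw [hu_mk, QuotientGroup.mk_mul, ← hP, ← hQ]
    exact (Hc _ _).eq
  -- the inner op value
  have hX : op ψ α (op ψ' β g h) ((ψ (evalE α g))⁻¹ * g⁻¹ * ψ (evalE α g))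
      = g * R * h * R⁻¹ * (Q * g⁻¹ * Q⁻¹) := by
    show g * R * h * R⁻¹ * ψ (evalE α (g * R * h * R⁻¹)) * (P⁻¹ * g⁻¹ * P)
        * (ψ (evalE α (g * R * h * R⁻¹)))⁻¹ = _
    calc g * R * h * R⁻¹ * ψ (evalE α (g * R * h * R⁻¹)) * (P⁻¹ * g⁻¹ * P)
            * (ψ (evalE α (g * R * h * R⁻¹)))⁻¹
        = g * R * h * R⁻¹ * (ψ (evalE α (g * R * h * R⁻¹)) * (P⁻¹ * g⁻¹ * P)
            * (ψ (evalE α (g * R * h * R⁻¹)))⁻¹) := by group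
      _ = g * R * h * R⁻¹ * ((Q * P) * (P⁻¹ * g⁻¹ * P) * (Q * P)⁻¹) := by rw [h1]
      _ = g * R * h * R⁻¹ * (Q * g⁻¹ * Q⁻¹) := by group
  rw [hX]
  -- conjugation by A(X) equals conjugation by Q
  have h2 : ∀ w : G,
      ψ (evalE α (g * R * h * R⁻¹ * (Q * g⁻¹ * Q⁻¹))) * w
        * (ψ (evalE α (g * R * h * R⁻¹ * (Q * g⁻¹ * Q⁻¹))))⁻¹ = Q * w * Q⁻¹ := by
    intro w
    apply conj_eq_of_center
    apply (QuotientGroup.eq (s := Subgroup.center G)).mp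
    rw [hQ]
    simp only [am, ainv]
    rw [conj_cancel (Hc _ _), conj_comm_cancel (Hc _ _).inv_right]
    exact conj_comm_cancel (Hc _ _)
  -- conjugation by R⁻¹*Q*R equals conjugation by Q
  have h3 : ∀ w : G, (R⁻¹ * Q * R) * w * (R⁻¹ * Q * R)⁻¹ = Q * w * Q⁻¹ := by
    intro w
    apply conj_eq_of_center
    have h0 : ⁅Q⁻¹, R⁻¹⁆ ∈ Subgroup.center G := by
      rw [hQ, hR, ← map_inv ψ, ← map_inv ψ']
      exact hcomm _ _
    have h0' := (Subgroup.center G).inv_mem h0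
    rw [commutatorElement_inv] at h0'
    have : (R⁻¹ * Q * R)⁻¹ * Q = ⁅R⁻¹, Q⁻¹⁆ := by
      rw [commutatorElement_def]; group
    rwa [this]
  -- finish
  simp only [op]
  calc g * R * (h * Q * k * Q⁻¹) * R⁻¹
      = g * R * h * ((R⁻¹ * Q * R) * k * (R⁻¹ * Q * R)⁻¹) * R⁻¹ := by rw [h3]; group
    _ = g * R * h * R⁻¹ * (Q * g⁻¹ * Q⁻¹)
          * (ψ (evalE α (g * R * h * R⁻¹ * (Q * g⁻¹ * Q⁻¹))) * (g * R * k * R⁻¹)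
            * (ψ (evalE α (g * R * h * R⁻¹ * (Q * g⁻¹ * Q⁻¹))))⁻¹) := by rw [h2]; group
    _ = g * R * h * R⁻¹ * (Q * g⁻¹ * Q⁻¹)
          * ψ (evalE α (g * R * h * R⁻¹ * (Q * g⁻¹ * Q⁻¹))) * (g * R * k * R⁻¹)
          * (ψ (evalE α (g * R * h * R⁻¹ * (Q * g⁻¹ * Q⁻¹))))⁻¹ := by group
end

section
/- Let ψ : G → G be a commutator-central endomorphism of a group G and let β ∈ 𝓔. Then the family N = {η_g : g ∈ G}, where η_g(h) = g ∘_{ψ,β} h, is G-stable: for all g, k, h ∈ G one has k · (g ∘_{ψ,β} (k⁻¹ · h)) = (k · g · ψ_β(g) · k⁻¹ · ψ_β(g)⁻¹) ∘_{ψ,β} h; that is, conjugating η_g by the left translation λ(k) yields η_{k g ψ_β(g) k⁻¹ ψ_β(g)⁻¹}. -/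
open scoped commutatorElement

/-- A commutator-central endomorphism maps the commutator subgroup into the center. -/
lemma psi_center {G : Type*} [Group G] (ψ : Monoid.End G)
    (hψ : ∀ g h : G, ψ ⁅g, h⁆ ∈ Subgroup.center G) :
    ∀ x ∈ commutator G, ψ x ∈ Subgroup.center G := by
  intro x hx
  rw [commutator_def, Subgroup.commutator_def] at hx
  induction hx using Subgroup.closure_induction with
  | mem y hy => obtain ⟨p, -, q, -, rfl⟩ := hy; exact hψ p q
  | one => simpa using Subgroup.one_mem _
  | mul a b _ _ ha hb => rw [map_mul]; exact Subgroup.mul_mem _ ha hb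
  | inv a _ ha => rw [map_inv]; exact Subgroup.inv_mem _ ha

/-- Any endomorphism maps the commutator subgroup into itself. -/
lemma end_comm {G : Type*} [Group G] (φ : Monoid.End G) :
    ∀ x ∈ commutator G, φ x ∈ commutator G := by
  intro x hx
  have := Subgroup.map_commutator (f := (φ : G →* G)) (H₁ := (⊤ : Subgroup G)) (H₂ := ⊤)
  have h2 : Subgroup.map (φ : G →* G) (commutator G) ≤ commutator G := by
    rw [commutator_def, this]
    exact Subgroup.commutator_mono le_top le_top
  exact h2 ⟨x, hx, rfl⟩

/-- If `x` and `y` agree modulo the commutator subgroup, then so do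
`evalE β x` and `evalE β y`. -/
lemma evalE_mod {G : Type*} [Group G] (β : FreeGroup (Monoid.End G)) {x y : G}
    (hxy : x⁻¹ * y ∈ commutator G) :
    (evalE β x)⁻¹ * evalE β y ∈ commutator G := by
  have key : ∀ z : G, (Abelianization.of (evalE β z) : Abelianization G) =
      FreeGroup.lift (fun φ : Monoid.End G => Abelianization.of (φ z)) β := by
    intro z
    have : (Abelianization.of.comp (FreeGroup.lift (fun φ : Monoid.End G => φ z))) =
        FreeGroup.lift (fun φ : Monoid.End G => Abelianization.of (φ z)) := by
      ext φ
      simp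
    exact congrFun (congrArg DFunLike.coe this) β
  have hφ : (fun φ : Monoid.End G => (Abelianization.of (φ x) : Abelianization G)) =
      fun φ => Abelianization.of (φ y) := by
    funext φ
    have : (φ x)⁻¹ * φ y ∈ commutator G := by
      have := end_comm φ _ hxy
      simpa using this
    exact (QuotientGroup.eq.mpr this)
  have : (Abelianization.of (evalE β x) : Abelianization G) = Abelianization.of (evalE β y) := by
    rw [key, key, hφ]
  exact QuotientGroup.eq.mp this

/-- the family `N = {η_g}` is `G`-stable: conjugating `η_g` by the
left translation `λ(k)` yields `η_{k·g·ψ_β(g)·k⁻¹·ψ_β(g)⁻¹}`. -/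
theorem op_G_stable {G : Type*} [Group G]
    (ψ : Monoid.End G) (hψ : ∀ g h : G, ψ ⁅g, h⁆ ∈ Subgroup.center G)
    (β : FreeGroup (Monoid.End G)) (g k h : G) :
    k * op ψ β g (k⁻¹ * h) =
      op ψ β (k * g * ψ (evalE β g) * k⁻¹ * (ψ (evalE β g))⁻¹) h := by
  set c := ψ (evalE β g) with hc
  set g' := k * g * c * k⁻¹ * c⁻¹ with hg'
  have hmem : g⁻¹ * g' ∈ commutator G := by
    have h1 : ⁅g⁻¹, k⁆ ∈ commutator G := by
      rw [commutator_def]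
      exact Subgroup.commutator_mem_commutator (Subgroup.mem_top _) (Subgroup.mem_top _)
    have h2 : ⁅k, c⁆ ∈ commutator G := by
      rw [commutator_def]
      exact Subgroup.commutator_mem_commutator (Subgroup.mem_top _) (Subgroup.mem_top _)
    have : g⁻¹ * g' = ⁅g⁻¹, k⁆ * ⁅k, c⁆ := by
      rw [hg']; simp [commutatorElement_def]; group
    rw [this]
    exact Subgroup.mul_mem _ h1 h2
  have hd : (evalE β g)⁻¹ * evalE β g' ∈ commutator G := evalE_mod β hmem
  set z := ψ ((evalE β g)⁻¹ * evalE β g') with hz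
  have hzc : z ∈ Subgroup.center G := psi_center ψ hψ _ hd
  have key : ψ (evalE β g') = c * z := by
    rw [hz, map_mul, hc, map_inv]
    group
  have hzh : h * z = z * h := Subgroup.mem_center_iff.mp hzc h
  show k * (g * c * (k⁻¹ * h) * c⁻¹) = g' * ψ (evalE β g') * h * (ψ (evalE β g'))⁻¹
  rw [key]
  symm
  calc g' * (c * z) * h * (c * z)⁻¹
      = g' * c * (z * h * z⁻¹) * c⁻¹ := by group
    _ = g' * c * (h * z * z⁻¹) * c⁻¹ := by rw [hzh]
    _ = k * (g * c * (k⁻¹ * h) * c⁻¹) := by rw [hg']; group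
end
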